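/- Let K be a field of characteristic different from 2 and let D ∈ K[X] be a non-constant polynomial. If there exist p, q ∈ K[X] with q ≠ 0 and p² − D·q² = 1, then the degree of D is even, the leading coefficient of D is a square in K, and D is not a square in K[X]. -/

import Mathlib

open Polynomial

/-- If the polynomial Pell equation `p² - D q² = 1` has a non-trivial solution for a
non-constant `D`, then `D` has even degree, square leading coefficient, and is not a square. -/
theorem polyPell_necessary_conditions {K : Type*} [Field K] (h2 : (2 : K) ≠ 0)
    (D : Polynomial K) (hD : 0 < D.degree)
    (p q : Polynomial K) (hq : q ≠ 0) (hpell : p ^ 2 - D * q ^ 2 = 1) :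
    Even D.natDegree ∧ (∃ c : K, D.leadingCoeff = c ^ 2) ∧
      ¬ ∃ E : Polynomial K, D = E ^ 2 := by
  have hD0 : D ≠ 0 := fun h => by simp [h] at hD
  have hDn : 0 < D.natDegree := natDegree_pos_iff_degree_pos.mpr hD
  have hq2 : q ^ 2 ≠ 0 := pow_ne_zero _ hq
  have hDq : D * q ^ 2 ≠ 0 := mul_ne_zero hD0 hq2
  have key : p ^ 2 = 1 + D * q ^ 2 := by linear_combination hpell
  have hdeglt : (1 : Polynomial K).degree < (D * q ^ 2).degree := by
    rw [degree_one, degree_mul]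
    calc (0 : WithBot ℕ) < D.degree := hD
      _ ≤ D.degree + (q ^ 2).degree := le_add_of_nonneg_right (zero_le_degree_iff.mpr hq2)
  have hnd : (p ^ 2).natDegree = (D * q ^ 2).natDegree := by
    rw [key, natDegree_add_eq_right_of_degree_lt hdeglt]
  have hdeg : 2 * p.natDegree = D.natDegree + 2 * q.natDegree := by
    have := hnd
    rw [natDegree_pow, natDegree_mul hD0 hq2, natDegree_pow] at this
    omega
  refine ⟨⟨p.natDegree - q.natDegree, by omega⟩, ?_, ?_⟩
  · -- leading coefficient
    have hlc : (p ^ 2).leadingCoeff = (D * q ^ 2).leadingCoeff := by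
      rw [key, leadingCoeff_add_of_degree_lt hdeglt]
    rw [leadingCoeff_pow, leadingCoeff_mul, leadingCoeff_pow] at hlc
    refine ⟨p.leadingCoeff / q.leadingCoeff, ?_⟩
    have hql : q.leadingCoeff ≠ 0 := leadingCoeff_ne_zero.mpr hq
    field_simp
    linear_combination -hlc
  · rintro ⟨E, rfl⟩
    have hE : E ≠ 0 := by
      intro h; simp [h] at hD0
    have hEn : 0 < E.natDegree := by
      rw [natDegree_pow] at hDn; omega
    have hmul : (p - E * q) * (p + E * q) = 1 := by linear_combination hpell
    have hu1 : IsUnit (p - E * q) := IsUnit.of_mul_eq_one _ hmul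
    have hu2 : IsUnit (p + E * q) := IsUnit.of_mul_eq_one _ (by
      rw [mul_comm] at hmul; exact hmul)
    have hd1 : (p - E * q).natDegree = 0 := natDegree_eq_zero_of_isUnit hu1
    have hd2 : (p + E * q).natDegree = 0 := natDegree_eq_zero_of_isUnit hu2
    have h2' : (2 : Polynomial K) ≠ 0 := by
      intro h
      apply h2
      have := congrArg (fun f => f.coeff 0) h
      simpa using this
    have hne : (2 : Polynomial K) * (E * q) ≠ 0 := by
      exact mul_ne_zero h2' (mul_ne_zero hE hq)
    have heq : (2 : Polynomial K) * (E * q) = (p + E * q) - (p - E * q) := by ring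
    have hle : ((2 : Polynomial K) * (E * q)).natDegree = 0 := by
      rw [heq]
      have := natDegree_sub_le (p + E * q) (p - E * q)
      omega
    rw [natDegree_mul h2' (mul_ne_zero hE hq), natDegree_mul hE hq] at hle
    have : (2 : Polynomial K).natDegree = 0 := by simp
    omega
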